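/- Every allocation in the support of an interim envy-free lottery is proportional: if Q is iEF and A is in the support of Q with agent i receiving bundle S = A_i, then v_i(S) ≥ (1/n) · v_i(I). -/

import Mathlib

open Finset

/-- Value of agent `i` for a bundle `S` of items (additive valuations). -/
def bundleVal {n m : ℕ} (v : Fin n → Fin m → ℝ) (i : Fin n) (S : Finset (Fin m)) : ℝ :=
  ∑ j ∈ S, v i j

/-- Probability that agent `i` receives bundle `S` under lottery `x`. -/
def prBundle {n m : ℕ} (x : (Fin n → Finset (Fin m)) → ℝ) (i : Fin n) (S : Finset (Fin m)) : ℝ :=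
  ∑ a ∈ Finset.univ.filter (fun a => a i = S), x a

/-- Interim envy-freeness: for all `i ≠ k` and every bundle `S` received with positive
probability, `v_i(S) ≥ E[v_i(A_k) | A_i = S]` (stated multiplied through by the
positive probability `Pr[A_i = S]`). -/
def IEF {n m : ℕ} (v : Fin n → Fin m → ℝ) (x : (Fin n → Finset (Fin m)) → ℝ) : Prop :=
  ∀ i k : Fin n, i ≠ k → ∀ S : Finset (Fin m), 0 < prBundle x i S →
    (∑ a ∈ Finset.univ.filter (fun a => a i = S), x a * bundleVal v i (a k))
      ≤ bundleVal v i S * prBundle x i S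

/-- An allocation is a partition of the items into bundles, one per agent. -/
def IsPartition {n m : ℕ} (a : Fin n → Finset (Fin m)) : Prop :=
  (∀ i k : Fin n, i ≠ k → Disjoint (a i) (a k)) ∧ ∀ j : Fin m, ∃ i, j ∈ a i

lemma partition_sum {n m : ℕ} {a : Fin n → Finset (Fin m)} (h : IsPartition a)
    (f : Fin m → ℝ) : ∑ k, ∑ j ∈ a k, f j = ∑ j, f j := by
  rw [← Finset.sum_biUnion (fun p _ q _ hpq => h.1 p q hpq)]
  apply Finset.sum_congr
  · ext j
    simpa [Finset.mem_biUnion] using h.2 j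
  · intros; rfl

/-- every allocation in the support of an iEF lottery is proportional. -/
theorem iEF_support_proportional {n m : ℕ} (hn : 0 < n) (v : Fin n → Fin m → ℝ)
    (hv : ∀ i j, 0 ≤ v i j)
    (x : (Fin n → Finset (Fin m)) → ℝ)
    (hx0 : ∀ a, 0 ≤ x a) (hx1 : ∑ a, x a = 1)
    (hsupp : ∀ a, 0 < x a → IsPartition a)
    (hief : IEF v x) :
    ∀ a, 0 < x a → ∀ i : Fin n,
      (1 / (n : ℝ)) * bundleVal v i Finset.univ ≤ bundleVal v i (a i) := by
  intro a ha i
  set S := a i with hS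
  have hP : 0 < prBundle x i S := by
    apply Finset.sum_pos' (fun b _ => hx0 b)
    exact ⟨a, by simp [hS], ha⟩
  have hsum : ∀ k : Fin n, ∑ b ∈ Finset.univ.filter (fun b => b i = S), x b * bundleVal v i (b k)
      ≤ bundleVal v i S * prBundle x i S := by
    intro k
    by_cases hk : i = k
    · subst hk
      apply le_of_eq
      rw [prBundle, Finset.mul_sum]
      apply Finset.sum_congr rfl
      intro b hb
      rw [Finset.mem_filter] at hb
      rw [hb.2, mul_comm]
    · exact hief i k hk S hP
  have htot : ∑ k : Fin n, ∑ b ∈ Finset.univ.filter (fun b => b i = S), x b * bundleVal v i (b k)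
      ≤ (n : ℝ) * (bundleVal v i S * prBundle x i S) := by
    calc ∑ k : Fin n, ∑ b ∈ Finset.univ.filter (fun b => b i = S), x b * bundleVal v i (b k)
        ≤ ∑ _k : Fin n, bundleVal v i S * prBundle x i S :=
          Finset.sum_le_sum (fun k _ => hsum k)
      _ = (n : ℝ) * (bundleVal v i S * prBundle x i S) := by
          simp [Finset.sum_const, nsmul_eq_mul]
  have hlhs : ∑ k : Fin n, ∑ b ∈ Finset.univ.filter (fun b => b i = S), x b * bundleVal v i (b k)
      = bundleVal v i Finset.univ * prBundle x i S := by
    rw [Finset.sum_comm, prBundle, Finset.mul_sum]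
    apply Finset.sum_congr rfl
    intro b _
    rcases eq_or_lt_of_le (hx0 b) with h0 | h0
    · simp [← h0]
    · rw [← Finset.mul_sum]
      have hps := partition_sum (hsupp b h0) (v i)
      simp only [bundleVal]
      rw [hps]; ring
  rw [hlhs] at htot
  have h2 : bundleVal v i Finset.univ ≤ (n : ℝ) * bundleVal v i S := by
    have := (mul_le_mul_iff_of_pos_right hP).mp (by linarith [htot] : bundleVal v i Finset.univ * prBundle x i S ≤ ((n : ℝ) * bundleVal v i S) * prBundle x i S)
    exact this
  have hn' : (0 : ℝ) < n := by exact_mod_cast hn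
  rw [one_div, inv_mul_le_iff₀ hn']
  exact h2
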